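/- Let q be an odd prime power, d a non-square in F_q*, and α in F_{q^2} with α² = d. If q ≡ 1 (mod 4), then the set {α} ∪ {c in F_q : c − α is a square in F_{q^2}} is a maximal clique of size (q+1)/2 in the Paley graph P(q²). If q ≡ 3 (mod 4), then the set {α, −α} ∪ {c in F_q : c − α is a square in F_{q^2}} is a maximal clique of size (q+3)/2 in P(q²). -/

import Mathlib

open Finset

section Abstract
variable {K : Type*} [Field K] [Fintype K] [DecidableEq K]

/-- The "hyperbola" c² - s² = g. -/
def hypT (g : K) : Finset (K × K) :=
  univ.filter (fun p => p.1 ^ 2 - p.2 ^ 2 = g)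

/-- The set of c with c² - g a square. -/
def sqSet (g : K) : Finset K := univ.filter (fun c => IsSquare (c ^ 2 - g))

lemma sum_hypT (hch : ringChar K ≠ 2) {g : K} (hg : g ≠ 0)
    {M : Type*} [AddCommMonoid M] (f : K × K → M) :
    ∑ p ∈ hypT g, f p
      = ∑ u ∈ univ.erase (0 : K), f ((u + g * u⁻¹) / 2, (u - g * u⁻¹) / 2) := by
  have h2 : (2 : K) ≠ 0 := Ring.two_ne_zero hch
  have sne : ∀ p : K × K, p.1 ^ 2 - p.2 ^ 2 = g → p.1 + p.2 ≠ 0 := by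
    intro p hp h0
    apply hg; rw [← hp]
    rw [eq_neg_of_add_eq_zero_left h0]; ring
  refine (Finset.sum_nbij'
    (i := fun u : K => ((((u + g * u⁻¹) / 2 : K), ((u - g * u⁻¹) / 2 : K)) : K × K))
    (j := fun p : K × K => p.1 + p.2) ?_ ?_ ?_ ?_ ?_).symm
  · intro u hu
    simp only [mem_erase, mem_univ, and_true] at hu
    simp only [hypT, mem_filter, mem_univ, true_and]
    field_simp
    ring
  · intro p hp
    simp only [hypT, mem_filter, mem_univ, true_and] at hp
    simp only [mem_erase, mem_univ, and_true]
    exact sne p hp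
  · intro u hu
    simp only [mem_erase, mem_univ, and_true] at hu
    field_simp
    ring
  · intro p hp
    simp only [hypT, mem_filter, mem_univ, true_and] at hp
    have h0 := sne p hp
    have key : g * (p.1 + p.2)⁻¹ = p.1 - p.2 := by
      field_simp
      linear_combination -2*hp + hp
    show ((p.1 + p.2 + g * (p.1 + p.2)⁻¹) / 2, (p.1 + p.2 - g * (p.1 + p.2)⁻¹) / 2) = p
    rw [key]
    ext
    · show (p.1 + p.2 + (p.1 - p.2)) / 2 = p.1
      field_simp; ring
    · show (p.1 + p.2 - (p.1 - p.2)) / 2 = p.2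
      field_simp; ring
  · intro u hu; rfl

lemma sum_fst_hypT (hch : ringChar K ≠ 2) {g : K} (hg2 : ¬ IsSquare g)
    {M : Type*} [AddCommMonoid M] (f : K → M) :
    ∑ p ∈ hypT g, f p.1 = ∑ c ∈ sqSet g, (f c + f c) := by
  have h2 : (2 : K) ≠ 0 := Ring.two_ne_zero hch
  have maps : ∀ p ∈ hypT g, p.1 ∈ sqSet g := by
    intro p hp
    simp only [hypT, mem_filter, mem_univ, true_and] at hp
    simp only [sqSet, mem_filter, mem_univ, true_and]
    exact ⟨p.2, by linear_combination hp⟩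
  rw [← Finset.sum_fiberwise_of_maps_to maps (fun p => f p.1)]
  refine Finset.sum_congr rfl ?_
  intro c hc
  simp only [sqSet, mem_filter, mem_univ, true_and] at hc
  obtain ⟨r, hr⟩ := hc
  have hr0 : r ≠ 0 := by
    intro h0; apply hg2
    rw [h0, mul_zero] at hr
    exact ⟨c, by linear_combination -hr⟩
  have hfiber : (hypT g).filter (fun p => p.1 = c) = {(c, r), (c, -r)} := by
    ext p
    simp only [hypT, mem_filter, mem_univ, true_and, mem_insert, mem_singleton]
    constructor
    · rintro ⟨hp, rfl⟩
      have : p.2 ^ 2 = r ^ 2 := by rw [sq r]; linear_combination -hp + hr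
      rcases (Commute.all p.2 r).sq_eq_sq_iff_eq_or_eq_neg.mp this with h | h
      · left; ext <;> simp [h]
      · right; ext <;> simp [h]
    · rintro (rfl | rfl)
      · exact ⟨by show c ^ 2 - r ^ 2 = g; linear_combination hr, rfl⟩
      · exact ⟨by show c ^ 2 - (-r) ^ 2 = g; linear_combination hr, rfl⟩
  rw [hfiber]
  have hne : ((c, r) : K × K) ≠ (c, -r) := by
    intro h
    have hrr : r = -r := congrArg Prod.snd h
    have h2' : (2:K) * r = 0 := by linear_combination hrr
    exact hr0 ((mul_eq_zero.mp h2').resolve_left h2)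
  rw [Finset.sum_pair hne]

lemma card_sqSet (hch : ringChar K ≠ 2) {g : K} (hg2 : ¬ IsSquare g) :
    2 * (sqSet g).card = Fintype.card K - 1 := by
  have hg : g ≠ 0 := fun h => hg2 (h ▸ IsSquare.zero)
  have h1 : ∑ p ∈ hypT g, (1 : ℕ) = ∑ c ∈ sqSet g, (1 + 1 : ℕ) :=
    sum_fst_hypT hch hg2 (fun _ => (1 : ℕ))
  have h2 : ∑ p ∈ hypT g, (1 : ℕ) = ∑ u ∈ univ.erase (0 : K), (1 : ℕ) :=
    sum_hypT hch hg (fun _ => (1 : ℕ))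
  simp only [Finset.sum_const, smul_eq_mul, mul_one] at h1 h2
  rw [Finset.card_erase_of_mem (mem_univ 0), Finset.card_univ] at h2
  omega

lemma sum_sqSet (hch : ringChar K ≠ 2) (g : K) :
    ∑ c ∈ sqSet g, c = 0 := by
  have h2 : (2 : K) ≠ 0 := Ring.two_ne_zero hch
  have hsymm : ∑ c ∈ sqSet g, c = ∑ c ∈ sqSet g, (-c) := by
    refine Finset.sum_nbij' (i := fun c : K => -c) (j := fun c : K => -c) ?_ ?_ ?_ ?_ ?_
    · intro c hc
      simp only [sqSet, mem_filter, mem_univ, true_and] at hc ⊢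
      rwa [neg_sq]
    · intro c hc
      simp only [sqSet, mem_filter, mem_univ, true_and] at hc ⊢
      rwa [neg_sq]
    · intro c _; simp
    · intro c _; simp
    · intro c _; simp
  have : (2 : K) * ∑ c ∈ sqSet g, c = 0 := by
    rw [two_mul]
    nth_rewrite 2 [hsymm]
    rw [← Finset.sum_add_distrib]
    simp
  exact (mul_eq_zero.mp this).resolve_left h2

lemma sum_sq_sqSet (hch : ringChar K ≠ 2) {g : K} (hg2 : ¬ IsSquare g)
    (hq3 : 3 < Fintype.card K) :
    ∑ c ∈ sqSet g, c ^ 2 = -g / 4 := by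
  have h2 : (2 : K) ≠ 0 := Ring.two_ne_zero hch
  have h4 : (4 : K) ≠ 0 := by
    intro h
    apply h2
    have : (2:K) * 2 = 0 := by rw [(by norm_num : (2:K)*2 = 4), h]
    exact (mul_self_eq_zero.mp this)
  have hg : g ≠ 0 := fun h => hg2 (h ▸ IsSquare.zero)
  have e1 : ∑ p ∈ hypT g, p.1 ^ 2 = ∑ c ∈ sqSet g, (c ^ 2 + c ^ 2) :=
    sum_fst_hypT hch hg2 (fun c => c ^ 2)
  have e2 : ∑ p ∈ hypT g, p.1 ^ 2
      = ∑ u ∈ univ.erase (0 : K), ((u + g * u⁻¹) / 2) ^ 2 :=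
    sum_hypT hch hg (fun p => p.1 ^ 2)
  -- compute the RHS of e2
  have e3 : ∀ u ∈ univ.erase (0 : K),
      ((u + g * u⁻¹) / 2) ^ 2 = (u ^ 2) / 4 + g / 2 + (g ^ 2 / 4) * (u⁻¹) ^ 2 := by
    intro u hu
    simp only [mem_erase, mem_univ, and_true] at hu
    field_simp
    ring
  have esum2 : ∑ u ∈ univ.erase (0 : K), u ^ 2 = 0 := by
    have h := FiniteField.sum_pow_lt_card_sub_one K 2 (by omega)
    rw [Finset.sum_erase (s := (univ : Finset K)) (f := fun u : K => u ^ 2)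
      (by norm_num : (0:K) ^ 2 = 0)]
    exact h
  have einveq : ∑ u ∈ univ.erase (0 : K), (u⁻¹) ^ 2 = ∑ u ∈ univ.erase (0 : K), u ^ 2 := by
    refine Finset.sum_nbij' (i := fun u : K => u⁻¹) (j := fun u : K => u⁻¹) ?_ ?_ ?_ ?_ ?_
    · intro u hu; simp only [mem_erase, mem_univ, and_true] at hu ⊢; exact inv_ne_zero hu
    · intro u hu; simp only [mem_erase, mem_univ, and_true] at hu ⊢; exact inv_ne_zero hu
    · intro u hu; simp only [mem_erase, mem_univ, and_true] at hu; simp [hu]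
    · intro u hu; simp only [mem_erase, mem_univ, and_true] at hu; simp [hu]
    · intro u hu; rfl
  have esuminv : ∑ u ∈ univ.erase (0 : K), (u⁻¹) ^ 2 = 0 := by rw [einveq, esum2]
  have ecard : ((univ.erase (0 : K)).card : K) = -1 := by
    rw [Finset.card_erase_of_mem (mem_univ 0), Finset.card_univ]
    have hq1 : 1 ≤ Fintype.card K := Fintype.card_pos
    push_cast [Nat.cast_sub hq1]
    rw [FiniteField.cast_card_eq_zero]
    ring
  have e4 : ∑ u ∈ univ.erase (0 : K), ((u + g * u⁻¹) / 2) ^ 2 = -g / 2 := by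
    rw [Finset.sum_congr rfl e3]
    rw [Finset.sum_add_distrib, Finset.sum_add_distrib, ← Finset.sum_div,
      Finset.sum_const, ← Finset.mul_sum]
    rw [esum2, esuminv, nsmul_eq_mul, ecard]
    ring
  -- combine
  have : ∑ c ∈ sqSet g, (c ^ 2 + c ^ 2) = -g / 2 := by rw [← e1, e2, e4]
  have h2' : (2:K) * ∑ c ∈ sqSet g, c ^ 2 = -g/2 := by
    rw [← this, Finset.mul_sum]
    refine Finset.sum_congr rfl fun c _ => by ring
  field_simp at h2' ⊢
  linear_combination h2'


lemma cast_card_sqSet_ne (hch : ringChar K ≠ 2) {g : K} (hg2 : ¬ IsSquare g) :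
    ((sqSet g).card : K) ≠ 0 := by
  intro h0
  have hc := card_sqSet hch hg2
  have : ((2 * (sqSet g).card : ℕ) : K) = ((Fintype.card K - 1 : ℕ) : K) := by rw [hc]
  rw [Nat.cast_mul, Nat.cast_two, h0, mul_zero] at this
  have hq1 : 1 ≤ Fintype.card K := Fintype.card_pos
  rw [Nat.cast_sub hq1, FiniteField.cast_card_eq_zero, Nat.cast_one] at this
  exact one_ne_zero (α := K) (by linear_combination this)

lemma stab (hch : ringChar K ≠ 2) {g a b : K} (hg2 : ¬ IsSquare g) (hb : b ≠ 0)
    (h : ∀ c : K, IsSquare (c ^ 2 - g) → IsSquare (((a - c) * b⁻¹) ^ 2 - g)) :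
    a = 0 ∧ b ^ 2 = 1 := by
  have h2 : (2 : K) ≠ 0 := Ring.two_ne_zero hch
  set ψ : K → K := fun c => (a - c) * b⁻¹ with hψ
  have hinj : Function.Injective ψ := by
    intro x y hxy
    simp only [hψ] at hxy
    have h3 := mul_right_cancel₀ (inv_ne_zero hb) hxy
    linear_combination -h3
  have himg : (sqSet g).image ψ = sqSet g := by
    apply Finset.eq_of_subset_of_card_le
    · intro y hy
      simp only [Finset.mem_image] at hy
      obtain ⟨c, hc, rfl⟩ := hy
      simp only [sqSet, mem_filter, mem_univ, true_and] at hc ⊢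
      exact h c hc
    · rw [Finset.card_image_of_injective _ hinj]
  have hsum : ∑ c ∈ sqSet g, ψ c = ∑ c ∈ sqSet g, c := by
    conv_rhs => rw [← himg]
    rw [Finset.sum_image (fun x _ y _ hxy => hinj hxy)]
  have hs0 := sum_sqSet hch g
  have hsum2 : ∑ c ∈ sqSet g, ψ c = ((sqSet g).card : K) * a * b⁻¹ := by
    simp only [hψ, sub_mul, Finset.sum_sub_distrib]
    rw [Finset.sum_const, ← Finset.sum_mul, hs0, nsmul_eq_mul]
    ring
  rw [hsum, hs0] at hsum2
  have hcard := cast_card_sqSet_ne hch hg2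
  have ha : a = 0 := by
    have := hsum2.symm
    rcases mul_eq_zero.mp this with h' | h'
    · rcases mul_eq_zero.mp h' with h'' | h''
      · exact absurd h'' hcard
      · exact h''
    · exact absurd h' (inv_ne_zero hb)
  refine ⟨ha, ?_⟩
  by_cases hq3 : 3 < Fintype.card K
  · have hsq := sum_sq_sqSet hch hg2 hq3
    have hsumsq : ∑ c ∈ sqSet g, (ψ c) ^ 2 = ∑ c ∈ sqSet g, c ^ 2 := by
      conv_rhs => rw [← himg]
      rw [Finset.sum_image (fun x _ y _ hxy => hinj hxy)]
    have hexp : ∑ c ∈ sqSet g, (ψ c) ^ 2 = (∑ c ∈ sqSet g, c ^ 2) * (b⁻¹) ^ 2 := by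
      rw [Finset.sum_mul]
      refine Finset.sum_congr rfl fun c _ => ?_
      simp only [hψ, ha]
      ring
    rw [hsumsq, hsq] at hexp
    have hg0 : g ≠ 0 := fun h' => hg2 (h' ▸ IsSquare.zero)
    have h4 : (4 : K) ≠ 0 := by
      intro h'
      exact h2 (mul_self_eq_zero.mp (by rw [(by norm_num : (2:K)*2 = 4), h']))
    have hne : (-g/4 : K) ≠ 0 := by
      simp only [ne_eq, div_eq_zero_iff, neg_eq_zero]
      push_neg
      exact ⟨hg0, h4⟩
    have hbinv : (b⁻¹) ^ 2 = 1 := by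
      have h' : (-g/4 : K) * 1 = (-g/4) * b⁻¹ ^ 2 := by rw [mul_one]; exact hexp
      exact (mul_left_cancel₀ hne h').symm
    rw [inv_pow] at hbinv
    rw [← inv_inv (b ^ 2), hbinv, inv_one]
  · -- card K = 3
    push_neg at hq3
    have hodd := FiniteField.odd_card_of_char_ne_two hch
    have hge : 2 ≤ Fintype.card K := Fintype.one_lt_card
    interval_cases h' : Fintype.card K
    · omega
    · have := FiniteField.pow_card_sub_one_eq_one b hb
      rw [h'] at this
      simpa using this

end Abstract



/-- A clique in the Paley graph P(q^2): any two distinct elements differ by a square. -/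
def paleyClique {F : Type*} [Field F] (C : Set F) : Prop :=
  ∀ x ∈ C, ∀ y ∈ C, x ≠ y → IsSquare (x - y)

/-- An independent set in the Paley graph P(q^2). -/
def paleyIndep {F : Type*} [Field F] (C : Set F) : Prop :=
  ∀ x ∈ C, ∀ y ∈ C, x ≠ y → ¬ IsSquare (x - y)

/-- A maximal clique in the Paley graph P(q^2). -/
def maxPaleyClique {F : Type*} [Field F] (C : Set F) : Prop :=
  paleyClique C ∧ ∀ C' : Set F, paleyClique C' → C ⊆ C' → C' = C

/-- A maximal independent set in the Paley graph P(q^2). -/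
def maxPaleyIndep {F : Type*} [Field F] (C : Set F) : Prop :=
  paleyIndep C ∧ ∀ C' : Set F, paleyIndep C' → C ⊆ C' → C' = C


/-- the (F_q, α)-construction gives a maximal clique of size
(q+1)/2 in P(q²) for q ≡ 1 (mod 4) and of size (q+3)/2 for q ≡ 3 (mod 4). -/
theorem stmt_4 (q : ℕ) (hq : Odd q) (hq' : IsPrimePow q)
    (F : Type*) [Field F] (hF : Nat.card F = q ^ 2)
    (K : Subfield F) (hK : Nat.card K = q)
    (d : F) (hdK : d ∈ K) (hd0 : d ≠ 0) (hdns : ¬ ∃ c ∈ K, c * c = d)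
    (α : F) (hα : α ^ 2 = d) :
    (q % 4 = 1 →
      maxPaleyClique ({α} ∪ {x : F | x ∈ K ∧ IsSquare (x - α)}) ∧
      ({α} ∪ {x : F | x ∈ K ∧ IsSquare (x - α)} : Set F).ncard = (q + 1) / 2) ∧
    (q % 4 = 3 →
      maxPaleyClique ({α, -α} ∪ {x : F | x ∈ K ∧ IsSquare (x - α)}) ∧
      ({α, -α} ∪ {x : F | x ∈ K ∧ IsSquare (x - α)} : Set F).ncard = (q + 3) / 2) := by
  have hq2 : 2 ≤ q := hq'.two_le
  have hq3' : 3 ≤ q := by rcases hq with ⟨k, hk⟩; omega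
  -- F is finite
  have hFin : Finite F := by
    have h0 : Nat.card F ≠ 0 := by rw [hF]; positivity
    exact (Nat.card_ne_zero.mp h0).2
  letI : Fintype F := Fintype.ofFinite F
  letI : Fintype K := Fintype.ofFinite K
  letI : DecidableEq F := Classical.decEq F
  letI : DecidableEq K := Classical.decEq K
  have hcardF : Fintype.card F = q ^ 2 := by rw [← Nat.card_eq_fintype_card, hF]
  have hcardK : Fintype.card K = q := by rw [← Nat.card_eq_fintype_card, hK]
  -- characteristic ≠ 2
  have hchF : ringChar F ≠ 2 := by
    intro h
    have h2 := FiniteField.even_card_of_char_two h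
    rw [hcardF] at h2
    rcases hq with ⟨k, hk⟩
    have : q ^ 2 = 2*(2*k*k+2*k)+1 := by rw [hk]; ring
    omega
  have hchK : ringChar (↥K) ≠ 2 := by
    intro h
    have h2 := FiniteField.even_card_of_char_two (F := ↥K) h
    rw [hcardK] at h2
    rcases hq with ⟨k, hk⟩
    omega
  have h2F : (2 : F) ≠ 0 := Ring.two_ne_zero hchF
  -- α ∉ K etc.
  have hα2K : α ∉ K := fun h => hdns ⟨α, h, by rw [← sq]; exact hα⟩
  have hα0 : α ≠ 0 := by
    intro h; apply hd0; rw [← hα, h]; ring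
  have hαne : α ≠ -α := by
    intro h
    have : (2:F) * α = 0 := by linear_combination h
    rcases mul_eq_zero.mp this with h' | h'
    · exact h2F h'
    · exact hα0 h'
  -- Frobenius is additive
  have hfrob : ∀ x y : F, (x + y) ^ q = x ^ q + y ^ q := by
    obtain ⟨p, n, hp, hn, hpn⟩ := hq'
    have hpp : p.Prime := hp.nat_prime
    have hrc : CharP F (ringChar F) := ringChar.charP F
    obtain ⟨m, hrp, hcard'⟩ := FiniteField.card F (ringChar F)
    have hpr : p = ringChar F := by
      have hdvd : p ∣ ringChar F ^ (m : ℕ) := by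
        rw [← hcard', hcardF, ← hpn, ← pow_mul]
        exact dvd_pow_self _ (by omega)
      have := hpp.dvd_of_dvd_pow (n := (m:ℕ)) (by simpa using hdvd)
      exact (Nat.prime_dvd_prime_iff_eq hpp hrp).mp this
    haveI : Fact (ringChar F).Prime := ⟨hrp⟩
    haveI := hrc
    intro x y
    rw [← hpn, hpr]
    exact add_pow_char_pow x y (ringChar F) n
  -- elements of K are fixed by x ↦ x^q
  have hKq : ∀ u : ↥K, ((u : F)) ^ q = (u : F) := by
    intro u
    have h1 : u ^ q = u := by rw [← hcardK]; exact FiniteField.pow_card u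
    calc ((u : F)) ^ q = ((u ^ q : ↥K) : F) := by push_cast; ring
    _ = (u : F) := by rw [h1]
  -- δ : the nonsquare in K
  set δ : ↥K := ⟨d, hdK⟩ with hδ
  have hδ0 : δ ≠ 0 := by
    intro h
    apply hd0
    have : ((δ : F)) = ((0 : ↥K) : F) := by rw [h]
    simpa [hδ] using this
  have hδns : ¬ IsSquare δ := by
    rintro ⟨r, hr⟩
    apply hdns
    refine ⟨(r : F), r.2, ?_⟩
    have : ((δ : F)) = ((r * r : ↥K) : F) := by rw [← hr]
    push_cast at this
    exact this.symm
  -- Euler: d^(q/2) = -1 in F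
  have hd_pow : d ^ (q / 2) = -1 := by
    have hdich := FiniteField.pow_dichotomy hchK hδ0
    rw [hcardK] at hdich
    rcases hdich with h1 | h1
    · exfalso
      apply hδns
      rw [FiniteField.isSquare_iff hchK hδ0, hcardK]
      exact h1
    · have : ((δ ^ (q / 2) : ↥K) : F) = ((-1 : ↥K) : F) := by rw [h1]
      push_cast at this
      exact this
  have hαq : α ^ q = -α := by
    have hq12 : q = 2 * (q / 2) + 1 := by rcases hq with ⟨k, hk⟩; omega
    conv_lhs => rw [hq12]
    rw [pow_succ, pow_mul, hα, hd_pow]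
    ring
  -- the exponent identity
  have hEe : Fintype.card F / 2 = (q + 1) * (q / 2) := by
    rw [hcardF]
    rcases hq with ⟨k, hk⟩
    have h1 : q ^ 2 = 2 * ((q + 1) * k) + 1 := by rw [hk]; ring
    have h2 : q / 2 = k := by omega
    rw [h1, h2, Nat.mul_add_div (by norm_num)]
    omega
  -- the master lemma
  have M : ∀ a b : ↥K, ((a : F) + (b : F) * α) ≠ 0 →
      (IsSquare ((a : F) + (b : F) * α) ↔ IsSquare (a ^ 2 - b ^ 2 * δ)) := by
    intro a b hne0
    have hfq : ((a : F) + (b : F) * α) ^ q = (a : F) - (b : F) * α := by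
      rw [hfrob, mul_pow, hKq a, hKq b, hαq]
      ring
    set z : ↥K := a ^ 2 - b ^ 2 * δ with hz
    have hzval : (z : F) = (a : F) ^ 2 - (b : F) ^ 2 * d := by
      simp only [hz]
      push_cast
      ring
    have hnormF : ((a : F) + (b : F) * α) ^ (q + 1) = (z : F) := by
      rw [pow_succ, hfq, hzval]
      linear_combination (-(b:F)^2) * hα
    have hzF0 : (z : F) ≠ 0 := by
      rw [← hnormF]
      exact pow_ne_zero _ hne0
    have hz0 : z ≠ 0 := fun h => hzF0 (by rw [h]; simp)
    rw [FiniteField.isSquare_iff hchF hne0, hEe, pow_mul, hnormF,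
      FiniteField.isSquare_iff hchK hz0, hcardK]
    constructor
    · intro h
      exact Subtype.ext (by push_cast; exact h)
    · intro h
      have h' := congrArg (Subtype.val) h
      push_cast at h'
      exact h'
  -- nonzero elements of K are squares in F
  have hKsq : ∀ u : ↥K, (u : F) ≠ 0 → IsSquare ((u : F)) := by
    intro u hu
    have h0 : (u : F) + ((0 : ↥K) : F) * α ≠ 0 := by
      push_cast
      simpa using hu
    have hM := M u 0 h0
    rw [show (u : F) + ((0 : ↥K) : F) * α = (u : F) by push_cast; ring] at hM
    rw [hM]
    exact ⟨u, by ring⟩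
  -- -1 is a square in F
  have hneg1F : IsSquare (-1 : F) := by
    rw [FiniteField.isSquare_neg_one_iff, hcardF]
    rcases hq with ⟨k, hk⟩
    have h1 : q ^ 2 = 4 * (k * k + k) + 1 := by rw [hk]; ring
    rw [h1, Nat.mul_add_mod]
    norm_num
  have hsqneg : ∀ y : F, IsSquare y → IsSquare (-y) := by
    intro y hy
    rw [show -y = (-1) * y by ring]
    exact hneg1F.mul hy
  -- stripping square factors in K
  have hstrip : ∀ b : ↥K, b ≠ 0 → ∀ w : ↥K, (IsSquare (b ^ 2 * w) ↔ IsSquare w) := by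
    intro b hb w
    constructor
    · rintro ⟨r, hr⟩
      refine ⟨r * b⁻¹, ?_⟩
      field_simp at hr ⊢
      linear_combination hr
    · rintro ⟨r, hr⟩
      exact ⟨b * r, by rw [hr]; ring⟩
  -- the two key adjacency translations
  have hBiff : ∀ u : ↥K, IsSquare ((u : F) - α) ↔ IsSquare (u ^ 2 - δ) := by
    intro u
    have hne : (u : F) + ((-1 : ↥K) : F) * α ≠ 0 := by
      push_cast
      intro h
      apply hα2K
      rw [show α = (u : F) by linear_combination -h]
      exact u.2
    have hM := M u (-1) hne
    rw [show (u : F) + ((-1 : ↥K) : F) * α = (u : F) - α by push_cast; ring] at hM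
    rw [hM, show u ^ 2 - (-1 : ↥K) ^ 2 * δ = u ^ 2 - δ by ring]
  have hBiff' : ∀ u : ↥K, IsSquare ((u : F) + α) ↔ IsSquare (u ^ 2 - δ) := by
    intro u
    have hne : (u : F) + ((1 : ↥K) : F) * α ≠ 0 := by
      push_cast
      intro h
      apply hα2K
      rw [show α = -(u : F) by linear_combination h]
      exact K.neg_mem u.2
    have hM := M u 1 hne
    rw [show (u : F) + ((1 : ↥K) : F) * α = (u : F) + α by push_cast; ring] at hM
    rw [hM, show u ^ 2 - (1 : ↥K) ^ 2 * δ = u ^ 2 - δ by ring]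
  -- 2α square iff q ≡ 3 (mod 4)
  have h2K : (2 : F) ∈ K := by
    have := K.add_mem K.one_mem K.one_mem
    rwa [one_add_one_eq_two] at this
  have h2α : IsSquare ((2 : F) * α) ↔ q % 4 = 3 := by
    set two : ↥K := ⟨2, h2K⟩ with htwo
    have htwo0 : two ≠ 0 := by
      intro h
      exact h2F (by simpa [htwo, Subtype.ext_iff] using h)
    have hne : ((0 : ↥K) : F) + (two : F) * α ≠ 0 := by
      push_cast
      intro h
      simp only [htwo, zero_add] at h
      rcases mul_eq_zero.mp h with h' | h'
      · exact h2F h'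
      · exact hα0 h'
    have hM := M 0 two hne
    rw [show ((0 : ↥K) : F) + (two : F) * α = (2 : F) * α by simp [htwo]] at hM
    rw [hM, show (0 : ↥K) ^ 2 - two ^ 2 * δ = two ^ 2 * (-δ) by ring, hstrip two htwo0]
    -- IsSquare (-δ) ↔ q % 4 = 3
    have hδneg0 : (-δ) ≠ 0 := neg_ne_zero.mpr hδ0
    have hne1 : (-1 : ↥K) ≠ 0 := by norm_num
    have hc1 : quadraticChar (↥K) δ = -1 := quadraticChar_neg_one_iff_not_isSquare.mpr hδns
    have hmul : quadraticChar (↥K) (-δ) = quadraticChar (↥K) (-1) * -1 := by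
      rw [show (-δ : ↥K) = (-1) * δ by ring, map_mul, hc1]
    have hneg1iff : IsSquare (-1 : ↥K) ↔ q % 4 ≠ 3 := by
      rw [FiniteField.isSquare_neg_one_iff, hcardK]
    constructor
    · intro hsq
      by_contra hne3
      have h11 : quadraticChar (↥K) (-1) = 1 :=
        (quadraticChar_one_iff_isSquare hne1).mpr (hneg1iff.mpr hne3)
      have := (quadraticChar_one_iff_isSquare hδneg0).mpr hsq
      rw [hmul, h11] at this
      norm_num at this
    · intro h3
      have hns1 : ¬ IsSquare (-1 : ↥K) := by rw [hneg1iff]; omega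
      have h11 : quadraticChar (↥K) (-1) = -1 := quadraticChar_neg_one_iff_not_isSquare.mpr hns1
      rw [← quadraticChar_one_iff_isSquare hδneg0, hmul, h11]
      norm_num
  -- the B set
  set Bs : Set F := {x : F | x ∈ K ∧ IsSquare (x - α)} with hBs
  set Bfin : Finset F := (sqSet δ).image (fun u : ↥K => (u : F)) with hBfin
  have hBset : Bs = ↑Bfin := by
    ext c
    simp only [hBs, Set.mem_setOf_eq, hBfin, Finset.coe_image, Set.mem_image, Finset.mem_coe,
      sqSet, Finset.mem_filter, Finset.mem_univ, true_and]
    constructor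
    · rintro ⟨hcK, hsq⟩
      exact ⟨⟨c, hcK⟩, (hBiff ⟨c, hcK⟩).mp hsq, rfl⟩
    · rintro ⟨u, hu, rfl⟩
      exact ⟨u.2, (hBiff u).mpr hu⟩
  have hcardB : Bfin.card = (q - 1) / 2 := by
    rw [hBfin, Finset.card_image_of_injective _ Subtype.coe_injective]
    have hcs := card_sqSet hchK hδns
    rw [hcardK] at hcs
    omega
  have hαB : α ∉ Bs := fun h => hα2K h.1
  have hnαB : -α ∉ Bs := by
    intro h
    apply hα2K
    have := K.neg_mem h.1
    simpa using this
  -- every element of F is a + bα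
  have hsurj : ∀ x : F, ∃ a b : ↥K, x = (a : F) + (b : F) * α := by
    have hinj : Function.Injective (fun p : ↥K × ↥K => (p.1 : F) + (p.2 : F) * α) := by
      rintro ⟨a, b⟩ ⟨a', b'⟩ h
      simp only at h
      by_cases hbb : b = b'
      · subst hbb
        have ha' : (a : F) = (a' : F) := by linear_combination h
        exact Prod.ext (Subtype.ext ha') rfl
      · exfalso
        have hbne : (b : F) - (b' : F) ≠ 0 := by
          intro h0
          exact hbb (Subtype.ext (by linear_combination h0))
        apply hα2K
        rw [show α = ((a' : F) - (a : F)) / ((b : F) - (b' : F)) by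
          rw [eq_div_iff hbne]
          linear_combination h]
        exact K.div_mem (K.sub_mem a'.2 a.2) (K.sub_mem b.2 b'.2)
    have hbij : Function.Bijective (fun p : ↥K × ↥K => (p.1 : F) + (p.2 : F) * α) := by
      rw [Fintype.bijective_iff_injective_and_card]
      refine ⟨hinj, ?_⟩
      rw [Fintype.card_prod, hcardK, hcardF]
      ring
    intro x
    obtain ⟨⟨a, b⟩, hab⟩ := hbij.2 x
    exact ⟨a, b, hab.symm⟩
  -- maximality core
  have hmax : ∀ C' : Set F, paleyClique C' → insert α Bs ⊆ C' →
      ∀ x ∈ C', x = α ∨ x = -α ∨ x ∈ Bs := by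
    intro C' hcl hsub x hx
    have hαC' : α ∈ C' := hsub (Set.mem_insert _ _)
    obtain ⟨a, b, rfl⟩ := hsurj x
    by_cases hb : b = 0
    · right; right
      have hx_eq : (a : F) + (b : F) * α = (a : F) := by rw [hb]; push_cast; ring
      have hxK : (a : F) + (b : F) * α ∈ K := by rw [hx_eq]; exact a.2
      have hxne : (a : F) + (b : F) * α ≠ α := fun h => hα2K (by rw [← h]; exact hxK)
      exact ⟨hxK, hcl _ hx α hαC' hxne⟩
    · have hbF : (b : F) ≠ 0 := fun h => hb (Subtype.ext h)
      have hadj : ∀ c : ↥K, IsSquare (c ^ 2 - δ) → IsSquare (((a - c) * b⁻¹) ^ 2 - δ) := by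
        intro c hc
        have hcC : (c : F) ∈ insert α Bs :=
          Set.mem_insert_iff.mpr (Or.inr ⟨c.2, (hBiff c).mpr hc⟩)
        have hxnec : (a : F) + (b : F) * α ≠ (c : F) := by
          intro h
          apply hα2K
          rw [show α = ((c : F) - (a : F)) / (b : F) by
            rw [eq_div_iff hbF]
            linear_combination h]
          exact K.div_mem (K.sub_mem c.2 a.2) b.2
        have hsq := hcl _ hx _ (hsub hcC) hxnec
        rw [show (a : F) + (b : F) * α - (c : F) = ((a - c : ↥K) : F) + (b : F) * α by
          push_cast; ring] at hsq
        have hne0 : ((a - c : ↥K) : F) + (b : F) * α ≠ 0 := by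
          intro h
          apply hα2K
          rw [show α = ((c : F) - (a : F)) / (b : F) by
            rw [eq_div_iff hbF]
            push_cast at h
            linear_combination h]
          exact K.div_mem (K.sub_mem c.2 a.2) b.2
        have hM := (M (a - c) b hne0).mp hsq
        rw [show (a - c) ^ 2 - b ^ 2 * δ = b ^ 2 * (((a - c) * b⁻¹) ^ 2 - δ) by
          field_simp
          try ring] at hM
        exact (hstrip b hb _).mp hM
      obtain ⟨ha0, hb1⟩ := stab hchK hδns hb hadj
      rcases sq_eq_one_iff.mp hb1 with h1 | h1
      · left; rw [ha0, h1]; push_cast; ring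
      · right; left; rw [ha0, h1]; push_cast; ring
  -- clique on insert α Bs (common part)
  have hcliq1 : paleyClique ({α} ∪ Bs) := by
    intro x hx y hy hne
    rcases hx with hx | hx <;> rcases hy with hy | hy
    · rw [Set.mem_singleton_iff] at hx hy
      exact absurd (hx.trans hy.symm) hne
    · rw [Set.mem_singleton_iff] at hx
      rw [hx, show α - y = -(y - α) by ring]
      exact hsqneg _ hy.2
    · rw [Set.mem_singleton_iff] at hy
      rw [hy]
      exact hx.2
    · exact hKsq ⟨x - y, K.sub_mem hx.1 hy.1⟩ (sub_ne_zero.mpr hne)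
  refine ⟨fun hq1 => ⟨⟨?_, ?_⟩, ?_⟩, fun hq3 => ⟨⟨?_, ?_⟩, ?_⟩⟩
  · -- clique, q ≡ 1
    exact hcliq1
  · -- maximality, q ≡ 1
    intro C' hcl hsub
    rw [Set.singleton_union] at hsub
    apply Set.Subset.antisymm
    · intro x hx
      rcases hmax C' hcl hsub x hx with h | h | h
      · exact Set.mem_union_left _ (by rw [Set.mem_singleton_iff]; exact h)
      · exfalso
        have hne' : α ≠ x := by rw [h]; exact hαne
        have hsq := hcl α (hsub (Set.mem_insert _ _)) x hx hne'
        rw [h, show α - -α = (2 : F) * α by ring] at hsq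
        have h3 := h2α.mp hsq
        omega
      · exact Set.mem_union_right _ h
    · rwa [Set.singleton_union]
  · -- size, q ≡ 1
    rw [Set.singleton_union, hBset, ← Finset.coe_insert, Set.ncard_coe_finset,
      Finset.card_insert_of_notMem (by rw [hBset] at hαB; simpa using hαB), hcardB]
    omega
  · -- clique, q ≡ 3
    intro x hx y hy hne
    have hx' : x = α ∨ x = -α ∨ x ∈ Bs := by
      rcases hx with hx | hx
      · rcases hx with hx | hx
        · exact Or.inl hx
        · exact Or.inr (Or.inl hx)
      · exact Or.inr (Or.inr hx)
    have hy' : y = α ∨ y = -α ∨ y ∈ Bs := by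
      rcases hy with hy | hy
      · rcases hy with hy | hy
        · exact Or.inl hy
        · exact Or.inr (Or.inl hy)
      · exact Or.inr (Or.inr hy)
    have h2αs : IsSquare ((2 : F) * α) := h2α.mpr hq3
    rcases hx' with hx1 | hx1 | hxB
    · rcases hy' with hy1 | hy1 | hyB
      · exact absurd (hx1.trans hy1.symm) hne
      · rw [hx1, hy1, show α - -α = (2 : F) * α by ring]
        exact h2αs
      · rw [hx1, show α - y = -(y - α) by ring]
        exact hsqneg _ hyB.2
    · rcases hy' with hy1 | hy1 | hyB
      · rw [hx1, hy1, show -α - α = -((2:F) * α) by ring]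
        exact hsqneg _ h2αs
      · exact absurd (hx1.trans hy1.symm) hne
      · rw [hx1, show -α - y = -(y + α) by ring]
        exact hsqneg _ ((hBiff' ⟨y, hyB.1⟩).mpr ((hBiff ⟨y, hyB.1⟩).mp hyB.2))
    · rcases hy' with hy1 | hy1 | hyB
      · rw [hy1]
        exact hxB.2
      · rw [hy1, show x - -α = x + α by ring]
        exact (hBiff' ⟨x, hxB.1⟩).mpr ((hBiff ⟨x, hxB.1⟩).mp hxB.2)
      · exact hKsq ⟨x - y, K.sub_mem hxB.1 hyB.1⟩ (sub_ne_zero.mpr hne)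
  · -- maximality, q ≡ 3
    intro C' hcl hsub
    have hsub' : insert α Bs ⊆ C' := by
      intro y hy
      apply hsub
      rcases Set.mem_insert_iff.mp hy with h | h
      · exact Set.mem_union_left _ (Or.inl h)
      · exact Set.mem_union_right _ h
    apply Set.Subset.antisymm
    · intro x hx
      rcases hmax C' hcl hsub' x hx with h | h | h
      · exact Set.mem_union_left _ (Or.inl h)
      · exact Set.mem_union_left _ (Or.inr h)
      · exact Set.mem_union_right _ h
    · exact hsub
  · -- size, q ≡ 3
    have hαBfin : α ∉ Bfin := by rw [hBset] at hαB; simpa using hαB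
    have hnαBfin : -α ∉ Bfin := by rw [hBset] at hnαB; simpa using hnαB
    rw [show ({α, -α} : Set F) ∪ Bs = insert α (insert (-α) Bs) by
      rw [Set.insert_union, Set.singleton_union]]
    rw [hBset, ← Finset.coe_insert, ← Finset.coe_insert, Set.ncard_coe_finset]
    rw [Finset.card_insert_of_notMem (by
      simp only [Finset.mem_insert]
      push_neg
      exact ⟨hαne, hαBfin⟩)]
    rw [Finset.card_insert_of_notMem hnαBfin, hcardB]
    omega
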